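/- Let f : ℝⁿ → ℝᵐ satisfy the dot-product order preservation property and f(0) = 0. Then f preserves orthogonality: for all u, v ∈ ℝⁿ, ⟨u, v⟩ = 0 implies ⟨f(u), f(v)⟩ = 0. -/
import Mathlib

open RealInnerProductSpace

theorem stmt_5 {n m : ℕ} (f : EuclideanSpace ℝ (Fin n) → EuclideanSpace ℝ (Fin m))
    (hord : ∀ x u v, ⟪x, u⟫ ≤ ⟪x, v⟫ → ⟪f x, f u⟫ ≤ ⟪f x, f v⟫)
    (h0 : f 0 = 0) :
    ∀ u v, ⟪u, v⟫ = 0 → ⟪f u, f v⟫ = 0 := by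
  intro u v huv
  have h1 := hord u v 0 (by simp [huv])
  have h2 := hord u 0 v (by simp [huv])
  rw [h0] at h1 h2
  simp only [inner_zero_right] at h1 h2
  linarith
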